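/- Let p be an odd prime and let H_p be the discrete Heisenberg group. If a class c ∈ H²(H_p; ℚ/ℤ) (group cohomology with coefficients in the trivial H_p-module ℚ/ℤ) restricts to zero in H²(A; ℚ/ℤ) for every abelian subgroup A of H_p, then c = 0. (Equivalently, the Bogomolov multiplier B₀(H_p), defined as the intersection over all abelian subgroups A ≤ H_p of the kernels of the restriction maps H²(H_p; ℚ/ℤ) → H²(A; ℚ/ℤ), is zero.) -/

import Mathlib

open Matrix

/-- The unitriangular matrix `M(a,b,c)`. -/
def Hmat (p : ℕ) (a b c : ZMod p) : Matrix (Fin 3) (Fin 3) (ZMod p) :=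
  !![1, a, b; 0, 1, c; 0, 0, 1]

lemma Hmat_mul (p : ℕ) (a b c a' b' c' : ZMod p) :
    Hmat p a b c * Hmat p a' b' c' = Hmat p (a + a') (b + b' + a * c') (c + c') := by
  simp only [Hmat, Matrix.mul_fin_three]
  congr 1 <;> ring

lemma Hmat_one (p : ℕ) : Hmat p 0 0 0 = 1 := by
  rw [Matrix.one_fin_three]; rfl

/-- `M(a,b,c)` as an element of `GL₃(𝔽_p)`. -/
def Hgl (p : ℕ) (a b c : ZMod p) : GL (Fin 3) (ZMod p) :=
  ⟨Hmat p a b c, Hmat p (-a) (a * c - b) (-c),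
    by rw [Hmat_mul]; rw [show a + -a = 0 by ring, show b + (a*c-b) + a * -c = 0 by ring,
      show c + -c = 0 by ring, Hmat_one],
    by rw [Hmat_mul]; rw [show -a + a = 0 by ring, show (a*c-b) + b + -a * c = 0 by ring,
      show -c + c = 0 by ring, Hmat_one]⟩

lemma Hgl_mul (p : ℕ) (a b c a' b' c' : ZMod p) :
    Hgl p a b c * Hgl p a' b' c' = Hgl p (a + a') (b + b' + a * c') (c + c') :=
  Units.ext (Hmat_mul p a b c a' b' c')

/-- The discrete Heisenberg group `H_p`: the subgroup of `GL₃(𝔽_p)` consisting of the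
upper unitriangular matrices `M(a,b,c)`. -/
def Heisenberg (p : ℕ) : Subgroup (GL (Fin 3) (ZMod p)) where
  carrier := { g | ∃ a b c : ZMod p, g = Hgl p a b c }
  one_mem' := ⟨0, 0, 0, Units.ext (Hmat_one p).symm⟩
  mul_mem' := by
    rintro g h ⟨a, b, c, rfl⟩ ⟨a', b', c', rfl⟩
    exact ⟨_, _, _, Hgl_mul p a b c a' b' c'⟩
  inv_mem' := by
    rintro g ⟨a, b, c, rfl⟩
    exact ⟨-a, a * c - b, -c, Units.ext rfl⟩

/-- The element `X = M(1,0,0)` of `H_p`. -/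
def He.X (p : ℕ) : Heisenberg p := ⟨Hgl p 1 0 0, 1, 0, 0, rfl⟩

/-- The element `Y = M(0,0,1)` of `H_p`. -/
def He.Y (p : ℕ) : Heisenberg p := ⟨Hgl p 0 0 1, 0, 0, 1, rfl⟩

/-- The element `Z = M(0,1,0)` of `H_p`. -/
def He.Z (p : ℕ) : Heisenberg p := ⟨Hgl p 0 1 0, 0, 1, 0, rfl⟩

/-- `ℚ/ℤ` as an additive group. -/
abbrev QmodZ : Type := ℚ ⧸ AddSubgroup.zmultiples (1 : ℚ)

/-- A 2-cocycle of a group `G` with coefficients in a trivial `G`-module `M`. -/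
def IsTwoCocycle {G M : Type*} [Group G] [AddCommGroup M] (f : G → G → M) : Prop :=
  ∀ g h k : G, f g h + f (g * h) k = f h k + f g (h * k)

/-- A 2-coboundary of a group `G` with coefficients in a trivial `G`-module `M`;
for a 2-cocycle `f`, being a coboundary means that the class of `f` in `H²(G; M)` is zero. -/
def IsTwoCoboundary {G M : Type*} [Group G] [AddCommGroup M] (f : G → G → M) : Prop :=
  ∃ φ : G → M, ∀ g h : G, f g h = φ g + φ h - φ (g * h)

namespace BogoAux

/-- The element `M(a,b,c)` of the Heisenberg group. -/
def HgE (p : ℕ) (a b c : ZMod p) : Heisenberg p := ⟨Hgl p a b c, a, b, c, rfl⟩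

lemma HgE_mul (p : ℕ) (a b c a' b' c' : ZMod p) :
    HgE p a b c * HgE p a' b' c' = HgE p (a + a') (b + b' + a * c') (c + c') :=
  Subtype.ext (Hgl_mul p a b c a' b' c')

lemma HgE_one (p : ℕ) : HgE p 0 0 0 = 1 :=
  Subtype.ext (Units.ext (Hmat_one p))

/-- coordinates -/
def coA {p : ℕ} (g : Heisenberg p) : ZMod p := ((g : GL (Fin 3) (ZMod p)) : Matrix (Fin 3) (Fin 3) (ZMod p)) 0 1
def coB {p : ℕ} (g : Heisenberg p) : ZMod p := ((g : GL (Fin 3) (ZMod p)) : Matrix (Fin 3) (Fin 3) (ZMod p)) 0 2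
def coC {p : ℕ} (g : Heisenberg p) : ZMod p := ((g : GL (Fin 3) (ZMod p)) : Matrix (Fin 3) (Fin 3) (ZMod p)) 1 2

@[simp] lemma coA_HgE (p : ℕ) (a b c : ZMod p) : coA (HgE p a b c) = a := by
  simp [coA, HgE, Hgl, Hmat]
@[simp] lemma coB_HgE (p : ℕ) (a b c : ZMod p) : coB (HgE p a b c) = b := by
  simp [coB, HgE, Hgl, Hmat]
@[simp] lemma coC_HgE (p : ℕ) (a b c : ZMod p) : coC (HgE p a b c) = c := by
  simp [coC, HgE, Hgl, Hmat]

lemma eq_HgE {p : ℕ} (g : Heisenberg p) : g = HgE p (coA g) (coB g) (coC g) := by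
  obtain ⟨a, b, c, h⟩ := g.2
  have hg : g = HgE p a b c := Subtype.ext h
  rw [hg, coA_HgE, coB_HgE, coC_HgE]

lemma coords_mul {p : ℕ} (g h : Heisenberg p) :
    g * h = HgE p (coA g + coA h) (coB g + coB h + coA g * coC h) (coC g + coC h) := by
  conv_lhs => rw [eq_HgE g, eq_HgE h]
  rw [HgE_mul]

lemma X_def (p : ℕ) : He.X p = HgE p 1 0 0 := rfl
lemma Y_def (p : ℕ) : He.Y p = HgE p 0 0 1 := rfl
lemma Z_def (p : ℕ) : He.Z p = HgE p 0 1 0 := rfl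

lemma X_pow (p : ℕ) (n : ℕ) : (He.X p) ^ n = HgE p (n : ZMod p) 0 0 := by
  induction n with
  | zero => simpa using (HgE_one p).symm
  | succ n ih =>
      rw [pow_succ, ih, X_def, HgE_mul]
      push_cast
      congr 1 <;> ring

lemma Y_pow (p : ℕ) (n : ℕ) : (He.Y p) ^ n = HgE p 0 0 (n : ZMod p) := by
  induction n with
  | zero => simpa using (HgE_one p).symm
  | succ n ih =>
      rw [pow_succ, ih, Y_def, HgE_mul]
      push_cast
      congr 1 <;> ring

lemma Z_pow (p : ℕ) (n : ℕ) : (He.Z p) ^ n = HgE p 0 (n : ZMod p) 0 := by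
  induction n with
  | zero => simpa using (HgE_one p).symm
  | succ n ih =>
      rw [pow_succ, ih, Z_def, HgE_mul]
      push_cast
      congr 1 <;> ring

lemma X_pow_p (p : ℕ) : (He.X p) ^ p = 1 := by
  rw [X_pow, ZMod.natCast_self, HgE_one]
lemma Y_pow_p (p : ℕ) : (He.Y p) ^ p = 1 := by
  rw [Y_pow, ZMod.natCast_self, HgE_one]

/-- `Z` is central in the Heisenberg group. -/
lemma Z_central (p : ℕ) (g : Heisenberg p) : He.Z p * g = g * He.Z p := by
  conv_lhs => rw [eq_HgE g]
  conv_rhs => rw [eq_HgE g]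
  rw [Z_def, HgE_mul, HgE_mul]
  congr 1 <;> ring

/-- The key commutator relation `X*Y = (Y*X)*Z`. -/
lemma XY_rel (p : ℕ) : He.X p * He.Y p = (He.Y p * He.X p) * He.Z p := by
  rw [X_def, Y_def, Z_def, HgE_mul, HgE_mul, HgE_mul]
  congr 1 <;> ring

end BogoAux

namespace BogoAux

lemma cocyc_g1 {G M : Type*} [Group G] [AddCommGroup M] {f : G → G → M}
    (hf : IsTwoCocycle f) (g : G) : f g 1 = f 1 1 := by
  have h := hf g 1 1
  simp only [mul_one, one_mul] at h
  exact add_right_cancel h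

lemma cocyc_1g {G M : Type*} [Group G] [AddCommGroup M] {f : G → G → M}
    (hf : IsTwoCocycle f) (g : G) : f 1 g = f 1 1 := by
  have h := hf 1 1 g
  simp only [mul_one, one_mul] at h
  exact (add_left_cancel ((add_comm (f 1 g) (f 1 1)).trans h)).symm

lemma cocyc_inv {G M : Type*} [Group G] [AddCommGroup M] {f : G → G → M}
    (hf : IsTwoCocycle f) (g : G) : f g g⁻¹ = f g⁻¹ g := by
  have h := hf g g⁻¹ g
  rw [mul_inv_cancel, inv_mul_cancel, cocyc_g1 hf, cocyc_1g hf] at h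
  exact add_right_cancel h

/-- The central extension of `Heisenberg p` by `ℚ/ℤ` determined by the 2-cocycle `f`. -/
@[ext] structure Ext (p : ℕ) (f : Heisenberg p → Heisenberg p → QmodZ)
    (hf : IsTwoCocycle f) : Type where
  g : Heisenberg p
  u : QmodZ

variable {p : ℕ} {f : Heisenberg p → Heisenberg p → QmodZ} {hf : IsTwoCocycle f}

instance extGroup : Group (Ext p f hf) where
  mul x y := ⟨x.g * y.g, x.u + y.u + f x.g y.g⟩
  one := ⟨1, - f 1 1⟩
  inv x := ⟨x.g⁻¹, -(x.u) - f x.g x.g⁻¹ - f 1 1⟩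
  mul_assoc a b c := by
    refine Ext.ext (mul_assoc _ _ _) ?_
    show a.u + b.u + f a.g b.g + c.u + f (a.g * b.g) c.g
        = a.u + (b.u + c.u + f b.g c.g) + f a.g (b.g * c.g)
    have h := hf a.g b.g c.g
    have e1 : a.u + b.u + f a.g b.g + c.u + f (a.g * b.g) c.g
        = a.u + b.u + c.u + (f a.g b.g + f (a.g * b.g) c.g) := by abel
    have e2 : a.u + (b.u + c.u + f b.g c.g) + f a.g (b.g * c.g)
        = a.u + b.u + c.u + (f b.g c.g + f a.g (b.g * c.g)) := by abel
    rw [e1, e2, h]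
  one_mul a := by
    refine Ext.ext (one_mul _) ?_
    show - f 1 1 + a.u + f 1 a.g = a.u
    rw [cocyc_1g hf a.g]; abel
  mul_one a := by
    refine Ext.ext (mul_one _) ?_
    show a.u + - f 1 1 + f a.g 1 = a.u
    rw [cocyc_g1 hf a.g]; abel
  inv_mul_cancel a := by
    refine Ext.ext (inv_mul_cancel _) ?_
    show -(a.u) - f a.g a.g⁻¹ - f 1 1 + a.u + f a.g⁻¹ a.g = - f 1 1
    rw [← cocyc_inv hf]; abel

@[simp] lemma g_mul (x y : Ext p f hf) : (x * y).g = x.g * y.g := rfl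
@[simp] lemma u_mul (x y : Ext p f hf) : (x * y).u = x.u + y.u + f x.g y.g := rfl
@[simp] lemma g_one : (1 : Ext p f hf).g = 1 := rfl
@[simp] lemma u_one : (1 : Ext p f hf).u = - f 1 1 := rfl
@[simp] lemma g_inv (x : Ext p f hf) : (x⁻¹).g = x.g⁻¹ := rfl

@[simp] lemma g_pow (x : Ext p f hf) (n : ℕ) : (x ^ n).g = x.g ^ n := by
  induction n with
  | zero => simp
  | succ n ih => rw [pow_succ, pow_succ, g_mul, ih]

/-- Two elements of the extension commute as soon as their images commute,
provided `f` is symmetric on commuting pairs. -/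
lemma commute_of_g (hsymm : ∀ g h : Heisenberg p, g * h = h * g → f g h = f h g)
    (x y : Ext p f hf) (h : x.g * y.g = y.g * x.g) : x * y = y * x := by
  refine Ext.ext h ?_
  show x.u + y.u + f x.g y.g = y.u + x.u + f y.g x.g
  rw [hsymm _ _ h]; abel

/-- Elements over `1` are central. -/
lemma central_of_g_one (x : Ext p f hf) (h : x.g = 1) (y : Ext p f hf) : x * y = y * x := by
  refine Ext.ext (by rw [g_mul, g_mul, h, one_mul, mul_one]) ?_
  show x.u + y.u + f x.g y.g = y.u + x.u + f y.g x.g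
  rw [h, cocyc_1g hf y.g, cocyc_g1 hf y.g]; abel

/-- The canonical central copy of `ℚ/ℤ` in the extension. -/
def psi (p : ℕ) (f : Heisenberg p → Heisenberg p → QmodZ) (hf : IsTwoCocycle f)
    (v : QmodZ) : Ext p f hf := ⟨1, v - f 1 1⟩

lemma psi_g (v : QmodZ) : (psi p f hf v).g = 1 := rfl

lemma psi_mul (v w : QmodZ) : psi p f hf v * psi p f hf w = psi p f hf (v + w) := by
  refine Ext.ext (one_mul 1) ?_
  show v - f 1 1 + (w - f 1 1) + f 1 1 = v + w - f 1 1
  abel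

lemma psi_zero : psi p f hf 0 = 1 := by
  refine Ext.ext rfl ?_
  show (0 : QmodZ) - f 1 1 = - f 1 1
  abel

lemma psi_pow (v : QmodZ) (n : ℕ) : (psi p f hf v) ^ n = psi p f hf (n • v) := by
  induction n with
  | zero => rw [pow_zero, zero_smul, psi_zero]
  | succ n ih => rw [pow_succ, ih, psi_mul, succ_nsmul]

lemma eq_psi_of_g_one (x : Ext p f hf) (h : x.g = 1) : x = psi p f hf (x.u + f 1 1) := by
  refine Ext.ext h ?_
  show x.u = x.u + f 1 1 - f 1 1
  abel

/-- divisibility of `ℚ/ℤ`. -/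
lemma QmodZ_div (n : ℕ) (hn : n ≠ 0) (w : QmodZ) : ∃ v : QmodZ, n • v = w := by
  obtain ⟨q, rfl⟩ := QuotientAddGroup.mk_surjective w
  refine ⟨((q / n : ℚ) : QmodZ), ?_⟩
  rw [← QuotientAddGroup.mk_nsmul]
  congr 1
  rw [nsmul_eq_mul]
  field_simp

/-- Every element of `H_p` of order dividing `p` admits a lift to the extension
of order dividing `p`. -/
lemma exists_lift_pow_one (hp : p ≠ 0) (g₀ : Heisenberg p) (hg : g₀ ^ p = 1) :
    ∃ x : Ext p f hf, x.g = g₀ ∧ x ^ p = 1 := by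
  set x0 : Ext p f hf := ⟨g₀, 0⟩ with hx0
  set w := (x0 ^ p).u with hw
  obtain ⟨v, hv⟩ := QmodZ_div p hp (-(w + f 1 1))
  refine ⟨x0 * psi p f hf v, ?_, ?_⟩
  · rw [g_mul, psi_g, mul_one]
  · have hcomm : Commute x0 (psi p f hf v) :=
      (central_of_g_one (psi p f hf v) rfl x0).symm
    have hxp : x0 ^ p = psi p f hf (w + f 1 1) :=
      eq_psi_of_g_one _ (by rw [g_pow, hg])
    rw [hcomm.mul_pow, psi_pow, hv, hxp, psi_mul, add_neg_cancel, psi_zero]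

/-- Powers mod `p` for elements of order dividing `p`. -/
lemma pow_mod {G : Type*} [Group G] (w : G) {q : ℕ} (hw : w ^ q = 1) (a : ℕ) :
    w ^ a = w ^ (a % q) := by
  conv_lhs => rw [← Nat.div_add_mod a q]
  rw [pow_add, pow_mul, hw, one_pow, one_mul]

lemma pow_eq_of_cast_eq {G : Type*} [Group G] [NeZero p] (w : G) (hw : w ^ p = 1)
    (m n : ℕ) (h : (m : ZMod p) = (n : ZMod p)) : w ^ m = w ^ n := by
  rw [pow_mod w hw m, pow_mod w hw n]
  have : m % p = n % p := by
    rw [← ZMod.val_natCast, ← ZMod.val_natCast, h]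
  rw [this]

end BogoAux


open BogoAux

/-- For an odd prime `p`, if a class `c ∈ H²(H_p; ℚ/ℤ)` restricts to zero in
`H²(A; ℚ/ℤ)` for every abelian subgroup `A ≤ H_p`, then `c = 0`; i.e. the Bogomolov multiplier
`B₀(H_p)`, the intersection of the kernels of all restrictions to abelian subgroups, is zero.
(Classes in `H²` with trivial coefficients are represented by 2-cocycles, restriction is
restriction of cocycles, and a class is zero iff a representing cocycle is a coboundary.) -/
theorem Bogomolov_multiplier_Heisenberg_trivial (p : ℕ) (hp : p.Prime) (hodd : Odd p)
    (f : Heisenberg p → Heisenberg p → QmodZ) (hf : IsTwoCocycle f)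
    (hres : ∀ A : Subgroup (Heisenberg p), (∀ x ∈ A, ∀ y ∈ A, x * y = y * x) →
      IsTwoCoboundary (fun a b : A => f a b)) :
    IsTwoCoboundary f := by
  classical
  have hp0 : p ≠ 0 := hp.ne_zero
  haveI : NeZero p := ⟨hp0⟩
  -- Step 1: `f` is symmetric on commuting pairs.
  have hsymm : ∀ g h : Heisenberg p, g * h = h * g → f g h = f h g := by
    intro g h hgh
    have base : ∀ a ∈ ({g, h} : Set (Heisenberg p)), ∀ b ∈ ({g, h} : Set (Heisenberg p)),
        a * b = b * a := by
      rintro a (rfl | rfl) b (rfl | rfl)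
      · rfl
      · exact hgh
      · exact hgh.symm
      · rfl
    have h1 : ∀ b ∈ Subgroup.closure ({g, h} : Set (Heisenberg p)),
        ∀ a ∈ ({g, h} : Set (Heisenberg p)), a * b = b * a := by
      intro b hb
      refine Subgroup.closure_induction (fun u hu => ?_) ?_
        (fun u v hu hv ihu ihv => ?_) (fun u hu ihu => ?_) hb
      · intro a ha; exact base a ha u hu
      · intro a ha; rw [mul_one, one_mul]
      · intro a ha; exact Commute.mul_right (ihu a ha) (ihv a ha)
      · intro a ha; exact Commute.inv_right (ihu a ha)
    have hAcomm : ∀ a ∈ Subgroup.closure ({g, h} : Set (Heisenberg p)),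
        ∀ b ∈ Subgroup.closure ({g, h} : Set (Heisenberg p)), a * b = b * a := by
      intro a ha b hb
      refine Subgroup.closure_induction (fun u hu => h1 b hb u hu) ?_
        (fun u v hu hv ihu ihv => ?_) (fun u hu ihu => ?_) ha
      · rw [one_mul, mul_one]
      · exact Commute.mul_left ihu ihv
      · exact Commute.inv_left ihu
    obtain ⟨φ, hφ⟩ := hres _ hAcomm
    have hgA : g ∈ Subgroup.closure ({g, h} : Set (Heisenberg p)) :=
      Subgroup.subset_closure (by simp)
    have hhA : h ∈ Subgroup.closure ({g, h} : Set (Heisenberg p)) :=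
      Subgroup.subset_closure (by simp)
    have e1 : f g h = φ ⟨g, hgA⟩ + φ ⟨h, hhA⟩ - φ (⟨g, hgA⟩ * ⟨h, hhA⟩) :=
      hφ ⟨g, hgA⟩ ⟨h, hhA⟩
    have e2 : f h g = φ ⟨h, hhA⟩ + φ ⟨g, hgA⟩ - φ (⟨h, hhA⟩ * ⟨g, hgA⟩) :=
      hφ ⟨h, hhA⟩ ⟨g, hgA⟩
    have e3 : (⟨g, hgA⟩ * ⟨h, hhA⟩ :
        Subgroup.closure ({g, h} : Set (Heisenberg p))) = ⟨h, hhA⟩ * ⟨g, hgA⟩ :=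
      Subtype.ext hgh
    rw [e1, e2, e3]; abel
  -- Step 2: lifts of `X` and `Y` of order dividing `p`.
  obtain ⟨x, hxg, hxp⟩ := exists_lift_pow_one (f := f) (hf := hf) hp0 (He.X p) (X_pow_p p)
  obtain ⟨y, hyg, hyp⟩ := exists_lift_pow_one (f := f) (hf := hf) hp0 (He.Y p) (Y_pow_p p)
  set z : Ext p f hf := (y * x)⁻¹ * (x * y) with hzdef
  have hzg : z.g = He.Z p := by
    rw [hzdef]
    simp only [g_mul, g_inv, hxg, hyg]
    rw [XY_rel p, inv_mul_cancel_left]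
  -- `z` is central in the extension.
  have hzc : ∀ w : Ext p f hf, z * w = w * z := by
    intro w
    refine commute_of_g hsymm z w ?_
    rw [hzg, Z_central]
  have hzcn : ∀ (n : ℕ) (w : Ext p f hf), z ^ n * w = w * z ^ n :=
    fun n w => Commute.pow_left (hzc w) n
  have swap1 : ∀ w w' : Ext p f hf, w * (z * w') = z * (w * w') := by
    intro w w'
    rw [← mul_assoc, ← hzc w, mul_assoc]
  have swapT : ∀ (n : ℕ) (w w' : Ext p f hf), w * (z ^ n * w') = z ^ n * (w * w') := by
    intro n w w'
    rw [← mul_assoc, ← hzcn n w, mul_assoc]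
  have hxyz : x * y = z * (y * x) := by
    rw [hzc (y * x), hzdef, mul_inv_cancel_left]
  -- Step 3: commutation relations among powers.
  have key1 : ∀ c : ℕ, x * y ^ c = z ^ c * (y ^ c * x) := by
    intro c
    induction c with
    | zero => simp
    | succ n ih =>
        rw [pow_succ y n, ← mul_assoc, ih, mul_assoc (z ^ n), mul_assoc (y ^ n), hxyz,
          swap1 (y ^ n), ← mul_assoc (z ^ n) z, ← pow_succ z n, mul_assoc (y ^ n) y x]
  have hzp : z ^ p = 1 := by
    have h := key1 p
    rw [hyp, mul_one, one_mul] at h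
    have h2 : z ^ p * x = 1 * x := by rw [one_mul, ← h]
    exact mul_right_cancel h2
  have key2 : ∀ a c : ℕ, x ^ a * y ^ c = z ^ (a * c) * (y ^ c * x ^ a) := by
    intro a c
    induction a with
    | zero => simp
    | succ n ih =>
        have he : c + n * c = (n + 1) * c := by ring
        rw [pow_succ x n, mul_assoc, key1 c, swapT c (x ^ n), ← mul_assoc (x ^ n) (y ^ c) x,
          ih, mul_assoc (z ^ (n * c)), ← mul_assoc (z ^ c) (z ^ (n * c)), ← pow_add, he,
          mul_assoc (y ^ c) (x ^ n) x, ← pow_succ x n]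
  have mulForm : ∀ a b c a' b' c' : ℕ,
      (z ^ b * (y ^ c * x ^ a)) * (z ^ b' * (y ^ c' * x ^ a')) =
        z ^ (b + b' + a * c') * (y ^ (c + c') * x ^ (a + a')) := by
    intro a b c a' b' c'
    rw [mul_assoc, mul_assoc, swapT b' (x ^ a), swapT b' (y ^ c),
      ← mul_assoc (z ^ b) (z ^ b'), ← pow_add z b b',
      ← mul_assoc (x ^ a) (y ^ c') (x ^ a'), key2 a c', mul_assoc (z ^ (a * c')),
      swapT (a * c') (y ^ c), ← mul_assoc (z ^ (b + b')) (z ^ (a * c')),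
      ← pow_add z (b + b') (a * c'), mul_assoc (y ^ c') (x ^ a) (x ^ a'),
      ← pow_add x a a', ← mul_assoc (y ^ c) (y ^ c'), ← pow_add y c c']
  -- Step 4: the splitting.
  set s : Heisenberg p → Ext p f hf :=
    fun g => z ^ (coB g).val * (y ^ (coC g).val * x ^ (coA g).val) with hs
  have sfst : ∀ g : Heisenberg p, (s g).g = g := by
    intro g
    simp only [hs]
    rw [g_mul, g_mul, g_pow, g_pow, g_pow, hzg, hyg, hxg, Z_pow, Y_pow, X_pow,
      HgE_mul, HgE_mul]
    simp only [zero_add, add_zero, zero_mul, mul_zero, ZMod.natCast_val, ZMod.cast_id]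
    exact (eq_HgE g).symm
  have shom : ∀ g h : Heisenberg p, s g * s h = s (g * h) := by
    intro g h
    simp only [hs]
    rw [mulForm]
    have hA : coA (g * h) = coA g + coA h := by rw [coords_mul]; simp
    have hB : coB (g * h) = coB g + coB h + coA g * coC h := by rw [coords_mul]; simp
    have hC : coC (g * h) = coC g + coC h := by rw [coords_mul]; simp
    rw [pow_eq_of_cast_eq z hzp ((coB g).val + (coB h).val + (coA g).val * (coC h).val)
        ((coB (g * h)).val) (by push_cast [ZMod.natCast_val, ZMod.cast_id, hB]; ring),
      pow_eq_of_cast_eq y hyp ((coC g).val + (coC h).val) ((coC (g * h)).val)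
        (by push_cast [ZMod.natCast_val, ZMod.cast_id, hC]; ring),
      pow_eq_of_cast_eq x hxp ((coA g).val + (coA h).val) ((coA (g * h)).val)
        (by push_cast [ZMod.natCast_val, ZMod.cast_id, hA]; ring)]
  -- Step 5: extract the coboundary.
  refine ⟨fun g => -(s g).u, ?_⟩
  intro g h
  have hu := congrArg Ext.u (shom g h)
  rw [u_mul, sfst g, sfst h] at hu
  have hfin : f g h = (s (g * h)).u - (s g).u - (s h).u := by rw [← hu]; abel
  rw [hfin, sub_neg_eq_add]; abel
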